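/- In the second-kind singular BGG complex (Σ = {α_n}), after adding the non-standard arrows d_1⋯d_{n−3} 0 0 0 → d_1⋯d_{n−3} 1 1 0 to the standard arrows within each parity class, the deletion map d_1⋯d_{n−2}d_{n−1}0 ↦ d_1⋯d_{n−2} becomes a directed-graph isomorphism from each parity class of W^{p,Σ} (rank n) onto the regular Hasse diagram W^{n−2} of binary words of length n−2, with arrows 01→10 (consecutive swap) and final 0→1. -/

import Mathlib

namespace Stmt12

/-- The standard arrows of the Hasse diagram `W^p` in the LS encoding: swap a consecutive
pair `01` to `10`, or change the last digit from `0` to `1`. -/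
def Arrow (n : ℕ) (w w' : Fin n → Bool) : Prop :=
  (∃ i j : Fin n, j.val = i.val + 1 ∧ w i = false ∧ w j = true ∧
      w' i = true ∧ w' j = false ∧ ∀ t : Fin n, t ≠ i → t ≠ j → w' t = w t) ∨
  (∃ i : Fin n, i.val = n - 1 ∧ w i = false ∧ w' i = true ∧
      ∀ t : Fin n, t ≠ i → w' t = w t)

/-- The non-standard arrows of the second-kind singular BGG complex: the digits at the
(0-indexed) positions `n - 3` and `n - 2` change from `(0, 0)` to `(1, 1)` (the last digit
stays `0`); this preserves the parity of the number of ones. -/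
def NonStdArrow (n : ℕ) (w w' : Fin n → Bool) : Prop :=
  ∃ i j : Fin n, i.val = n - 3 ∧ j.val = n - 2 ∧
    w i = false ∧ w j = false ∧ w' i = true ∧ w' j = true ∧
    ∀ t : Fin n, t ≠ i → t ≠ j → w' t = w t

/-- Indicator of a boolean, in `ZMod 2`. -/
def ind (b : Bool) : ZMod 2 := if b = true then 1 else 0

lemma ind_inj {a b : Bool} (h : ind a = ind b) : a = b := by
  cases a <;> cases b <;> simp_all [ind]

lemma zmod2_add_one {x y : ZMod 2} (h : x ≠ y) : x + 1 = y := by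
  revert h
  have : ∀ x y : ZMod 2, x ≠ y → x + 1 = y := by decide
  exact this x y

/-- Parity sum of a word. -/
def par {k : ℕ} (w : Fin k → Bool) : ZMod 2 := ∑ i, ind (w i)

lemma even_iff_par {k : ℕ} (w : Fin k → Bool) :
    Even (Finset.univ.filter (fun i => w i = true)).card ↔ par w = 0 := by
  have h1 : ((Finset.univ.filter (fun i => w i = true)).card : ZMod 2) = par w := by
    rw [Finset.card_filter, Nat.cast_sum, par]
    refine Finset.sum_congr rfl fun i _ => ?_
    by_cases h : w i = true <;> simp [h, ind]
  rw [← h1, ZMod.natCast_eq_zero_iff, Nat.even_iff]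
  omega

/-- One-point modification. -/
lemma par_one {k : ℕ} (u v : Fin k → Bool) (i : Fin k)
    (h : ∀ t, t ≠ i → v t = u t) : par v = par u + ind (v i) - ind (u i) := by
  unfold par
  rw [← Finset.add_sum_erase _ (fun t => ind (v t)) (Finset.mem_univ i),
    ← Finset.add_sum_erase _ (fun t => ind (u t)) (Finset.mem_univ i)]
  have : ∑ t ∈ Finset.univ.erase i, ind (v t) = ∑ t ∈ Finset.univ.erase i, ind (u t) :=
    Finset.sum_congr rfl fun t ht => by rw [h t (Finset.ne_of_mem_erase ht)]
  rw [this]; ring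

/-- Two-point modification. -/
lemma par_two {k : ℕ} (u v : Fin k → Bool) (i j : Fin k) (hij : i ≠ j)
    (h : ∀ t, t ≠ i → t ≠ j → v t = u t) :
    par v = par u + (ind (v i) + ind (v j)) - (ind (u i) + ind (u j)) := by
  unfold par
  rw [← Finset.add_sum_erase _ (fun t => ind (v t)) (Finset.mem_univ i),
    ← Finset.add_sum_erase _ (fun t => ind (u t)) (Finset.mem_univ i),
    ← Finset.add_sum_erase _ (fun t => ind (v t))
      (Finset.mem_erase.mpr ⟨hij.symm, Finset.mem_univ j⟩),
    ← Finset.add_sum_erase _ (fun t => ind (u t))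
      (Finset.mem_erase.mpr ⟨hij.symm, Finset.mem_univ j⟩)]
  have : ∑ t ∈ (Finset.univ.erase i).erase j, ind (v t)
      = ∑ t ∈ (Finset.univ.erase i).erase j, ind (u t) :=
    Finset.sum_congr rfl fun t ht => by
      have h1 := Finset.ne_of_mem_erase ht
      have h2 := Finset.ne_of_mem_erase (Finset.mem_of_mem_erase ht)
      rw [h t h2 h1]
  rw [this]; ring

/-- Splitting off the last two digits, when the last digit is `0`. -/
lemma par_split (n : ℕ) (hn : 2 < n) (w : Fin n → Bool)
    (hlast : w ⟨n - 1, by omega⟩ = false) :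
    par w = par (fun t : Fin (n - 2) => w ⟨t.val, by omega⟩) + ind (w ⟨n - 2, by omega⟩) := by
  classical
  set g : ℕ → ZMod 2 := fun m => if h : m < n then ind (w ⟨m, h⟩) else 0 with hg
  have h1 : par w = ∑ m ∈ Finset.range n, g m := by
    rw [← Fin.sum_univ_eq_sum_range g n]
    exact Finset.sum_congr rfl fun i _ => by simp [hg, i.isLt]
  have h2 : par (fun t : Fin (n - 2) => w ⟨t.val, by omega⟩)
      = ∑ m ∈ Finset.range (n - 2), g m := by
    rw [← Fin.sum_univ_eq_sum_range g (n - 2)]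
    refine Finset.sum_congr rfl fun i _ => ?_
    have hi : (i : ℕ) < n := by omega
    simp [hg, hi]
  have hrange : ∑ m ∈ Finset.range n, g m = ∑ m ∈ Finset.range ((n - 2) + 1 + 1), g m := by
    have hnn : (n - 2) + 1 + 1 = n := by omega
    rw [hnn]
  rw [h1, hrange, Finset.sum_range_succ, Finset.sum_range_succ, ← h2]
  have e1 : g (n - 2) = ind (w ⟨n - 2, by omega⟩) := by
    have h : n - 2 < n := by omega
    simp [hg, h]
  have e2 : g (n - 2 + 1) = 0 := by
    have h : n - 2 + 1 < n := by omega
    have h' : (⟨n - 2 + 1, h⟩ : Fin n) = ⟨n - 1, by omega⟩ := by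
      apply Fin.ext; simp; omega
    simp [hg, h, h', hlast, ind]
  rw [e1, e2, add_zero]

set_option maxHeartbeats 1000000 in
theorem singular_bgg_graph_iso_second_kind (n : ℕ) (hn : 3 ≤ n) (b : Bool) :
    Function.Bijective
      (fun (w : {w : Fin n → Bool // w ⟨n - 1, by omega⟩ = false ∧
          (Even (Finset.univ.filter (fun i => w i = true)).card ↔ b = true)}) =>
        fun t : Fin (n - 2) => w.val ⟨t.val, by omega⟩) ∧
    ∀ (u v : {w : Fin n → Bool // w ⟨n - 1, by omega⟩ = false ∧
        (Even (Finset.univ.filter (fun i => w i = true)).card ↔ b = true)}),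
      (Arrow n u.val v.val ∨ NonStdArrow n u.val v.val) ↔
        Arrow (n - 2) (fun t : Fin (n - 2) => u.val ⟨t.val, by omega⟩)
          (fun t : Fin (n - 2) => v.val ⟨t.val, by omega⟩) := by
  classical
  -- target parity value
  set x : ZMod 2 := if b = true then 0 else 1 with hx
  have hparx : ∀ (w : Fin n → Bool),
      ((Even (Finset.univ.filter (fun i => w i = true)).card ↔ b = true) ↔ par w = x) := by
    intro w
    rw [even_iff_par]
    cases b
    · have h0 : x = 1 := by simp [hx]
      rw [h0]
      have h2 : ∀ y : ZMod 2, ¬y = 0 ↔ y = 1 := by decide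
      simp [h2 (par w)]
    · have h0 : x = 0 := by simp [hx]
      rw [h0]; simp
  have hmemlast : ∀ (w : {w : Fin n → Bool // w ⟨n - 1, by omega⟩ = false ∧
        (Even (Finset.univ.filter (fun i => w i = true)).card ↔ b = true)}),
      w.val ⟨n - 1, by omega⟩ = false := fun w => w.2.1
  have hmempar : ∀ (w : {w : Fin n → Bool // w ⟨n - 1, by omega⟩ = false ∧
        (Even (Finset.univ.filter (fun i => w i = true)).card ↔ b = true)}),
      par w.val = x := fun w => (hparx w.val).mp w.2.2
  constructor
  · constructor
    · -- injectivity
      rintro u v h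
      have hR : ∀ t : Fin (n - 2), u.val ⟨t.val, by omega⟩ = v.val ⟨t.val, by omega⟩ :=
        fun t => congrFun h t
      set RU : Fin (n - 2) → Bool := fun t => u.val ⟨t.val, by omega⟩ with hRU
      set RV : Fin (n - 2) → Bool := fun t => v.val ⟨t.val, by omega⟩ with hRV
      have hpu : par u.val = par RU + ind (u.val ⟨n - 2, by omega⟩) :=
        par_split n hn u.val (hmemlast u)
      have hpv : par v.val = par RV + ind (v.val ⟨n - 2, by omega⟩) :=
        par_split n hn v.val (hmemlast v)
      have hres : par RU = par RV := by
        unfold par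
        exact Finset.sum_congr rfl fun t _ => congrArg ind (hR t)
      have hind : ind (u.val ⟨n - 2, by omega⟩) = ind (v.val ⟨n - 2, by omega⟩) := by
        have h1 := hmempar u
        have h2 := hmempar v
        rw [hpu, hres] at h1
        rw [hpv] at h2
        exact add_left_cancel (h1.trans h2.symm)
      have hmid : u.val ⟨n - 2, by omega⟩ = v.val ⟨n - 2, by omega⟩ := ind_inj hind
      apply Subtype.ext
      funext i
      rcases lt_trichotomy i.val (n - 2) with hi | hi | hi
      · exact hR ⟨i.val, hi⟩
      · have he : i = ⟨n - 2, by omega⟩ := Fin.ext (show i.val = n - 2 from hi)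
        rw [he]; exact hmid
      · have he : i = ⟨n - 1, by omega⟩ :=
          Fin.ext (show i.val = n - 1 by have := i.isLt; omega)
        rw [he, hmemlast u, hmemlast v]
    · -- surjectivity
      rintro r
      set c : Bool := decide (par r ≠ x) with hc
      set w : Fin n → Bool := fun i =>
        if h : i.val < n - 2 then r ⟨i.val, h⟩ else if i.val = n - 2 then c else false with hw
      have hwlast : w ⟨n - 1, by omega⟩ = false := by
        show (if h : n - 1 < n - 2 then r ⟨n - 1, h⟩ else if n - 1 = n - 2 then c else false)
          = false
        rw [dif_neg (by omega), if_neg (by omega)]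
      have hwmid : w ⟨n - 2, by omega⟩ = c := by
        show (if h : n - 2 < n - 2 then r ⟨n - 2, h⟩ else if n - 2 = n - 2 then c else false) = c
        rw [dif_neg (by omega), if_pos rfl]
      have hwres : (fun t : Fin (n - 2) => w ⟨t.val, by omega⟩) = r := by
        funext t
        show (if h : t.val < n - 2 then r ⟨t.val, h⟩ else _) = r t
        rw [dif_pos t.isLt]
      have hwpar : par w = x := by
        have hps : par w = par (fun t : Fin (n - 2) => w ⟨t.val, by omega⟩)
            + ind (w ⟨n - 2, by omega⟩) := par_split n hn w hwlast
        rw [hps, hwmid, hwres]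
        by_cases h : par r = x
        · have hcf : c = false := by simp [hc, h]
          rw [hcf]; simp [ind, h]
        · have hct : c = true := by simp [hc, h]
          rw [hct]; simp only [ind, if_pos rfl]
          exact zmod2_add_one h
      exact ⟨⟨w, hwlast, (hparx w).mpr hwpar⟩, hwres⟩
  · -- arrow correspondence
    intro u v
    set RU : Fin (n - 2) → Bool := fun t => u.val ⟨t.val, by omega⟩ with hRU
    set RV : Fin (n - 2) → Bool := fun t => v.val ⟨t.val, by omega⟩ with hRV
    have hpu : par u.val = par RU + ind (u.val ⟨n - 2, by omega⟩) :=
      par_split n hn u.val (hmemlast u)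
    have hpv : par v.val = par RV + ind (v.val ⟨n - 2, by omega⟩) :=
      par_split n hn v.val (hmemlast v)
    show (Arrow n u.val v.val ∨ NonStdArrow n u.val v.val) ↔ Arrow (n - 2) RU RV
    constructor
    · rintro ((⟨i, j, hji, hui, huj, hvi, hvj, hrest⟩ | ⟨i, hi, hui, hvi, _⟩) |
        ⟨i, j, hi, hj, hui, huj, hvi, hvj, hrest⟩)
      · -- standard swap
        have hjne : j.val ≠ n - 1 := by
          intro h
          have he : j = ⟨n - 1, by omega⟩ := Fin.ext h
          rw [he, hmemlast u] at huj
          exact absurd huj (by simp)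
        have hjle : j.val ≤ n - 2 := by have := j.isLt; omega
        rcases lt_or_eq_of_le hjle with hjlt | hjeq
        · -- swap inside the restriction
          left
          refine ⟨⟨i.val, by omega⟩, ⟨j.val, hjlt⟩, hji, hui, huj, hvi, hvj, ?_⟩
          intro t hti htj
          have h1 : (⟨t.val, by omega⟩ : Fin n) ≠ i := fun h =>
            hti (Fin.ext (show t.val = i.val from congrArg Fin.val h))
          have h2 : (⟨t.val, by omega⟩ : Fin n) ≠ j := fun h =>
            htj (Fin.ext (show t.val = j.val from congrArg Fin.val h))
          exact hrest _ h1 h2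
        · -- swap at positions (n-3, n-2) : becomes the final arrow
          right
          have hieq : i.val = n - 3 := by omega
          have hei : (⟨n - 3, by omega⟩ : Fin n) = i := Fin.ext hieq.symm
          refine ⟨⟨n - 3, by omega⟩, show n - 3 = n - 2 - 1 by omega, ?_, ?_, ?_⟩
          · show u.val ⟨n - 3, by omega⟩ = false
            rw [hei]; exact hui
          · show v.val ⟨n - 3, by omega⟩ = true
            rw [hei]; exact hvi
          · intro t ht
            have h1 : (⟨t.val, by omega⟩ : Fin n) ≠ i := by
              intro h
              have hv : t.val = i.val := congrArg Fin.val h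
              exact ht (Fin.ext (show t.val = n - 2 - 1 by omega))
            have h2 : (⟨t.val, by omega⟩ : Fin n) ≠ j := by
              intro h
              have hv : t.val = j.val := congrArg Fin.val h
              have := t.isLt; omega
            exact hrest _ h1 h2
      · -- standard final arrow : impossible (last digit stays 0 in the class)
        exfalso
        have he : i = ⟨n - 1, by omega⟩ := Fin.ext hi
        rw [he, hmemlast v] at hvi
        exact absurd hvi (by simp)
      · -- non-standard arrow : becomes the final arrow
        right
        have hei : (⟨n - 3, by omega⟩ : Fin n) = i := Fin.ext hi.symm
        refine ⟨⟨n - 3, by omega⟩, show n - 3 = n - 2 - 1 by omega, ?_, ?_, ?_⟩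
        · show u.val ⟨n - 3, by omega⟩ = false
          rw [hei]; exact hui
        · show v.val ⟨n - 3, by omega⟩ = true
          rw [hei]; exact hvi
        · intro t ht
          have h1 : (⟨t.val, by omega⟩ : Fin n) ≠ i := by
            intro h
            have hv : t.val = i.val := congrArg Fin.val h
            exact ht (Fin.ext (show t.val = n - 2 - 1 by omega))
          have h2 : (⟨t.val, by omega⟩ : Fin n) ≠ j := by
            intro h
            have hv : t.val = j.val := congrArg Fin.val h
            have := t.isLt; omega
          exact hrest _ h1 h2
    · rintro (⟨i', j', hji, hui, huj, hvi, hvj, hrest⟩ | ⟨i', hi, hui, hvi, hrest⟩)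
      · -- restricted swap lifts to a swap
        left; left
        have hlow : ∀ t : Fin n, t.val < n - 2 →
            t.val ≠ i'.val → t.val ≠ j'.val → v.val t = u.val t := by
          intro t ht hti htj
          have h1 : (⟨t.val, ht⟩ : Fin (n - 2)) ≠ i' := fun h => hti (congrArg Fin.val h)
          have h2 : (⟨t.val, ht⟩ : Fin (n - 2)) ≠ j' := fun h => htj (congrArg Fin.val h)
          have := hrest ⟨t.val, ht⟩ h1 h2
          exact this
        have hres : par RV = par RU := by
          have hij' : i' ≠ j' := by
            intro h; have := congrArg Fin.val h; omega
          have hp : par RV = par RU + (ind (RV i') + ind (RV j'))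
              - (ind (RU i') + ind (RU j')) := par_two RU RV i' j' hij' hrest
          rw [hui, huj, hvi, hvj] at hp
          rw [hp]
          simp [ind]
        have hmid : v.val ⟨n - 2, by omega⟩ = u.val ⟨n - 2, by omega⟩ := by
          apply ind_inj
          have h1 := hmempar u
          have h2 := hmempar v
          rw [hpu] at h1
          rw [hpv, hres] at h2
          exact add_left_cancel (h2.trans h1.symm)
        refine ⟨⟨i'.val, by omega⟩, ⟨j'.val, by omega⟩, hji, hui, huj, hvi, hvj, ?_⟩
        intro t hti htj
        have hti' : t.val ≠ i'.val := fun h => hti (Fin.ext h)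
        have htj' : t.val ≠ j'.val := fun h => htj (Fin.ext h)
        rcases lt_trichotomy t.val (n - 2) with ht | ht | ht
        · exact hlow t ht hti' htj'
        · have he : t = ⟨n - 2, by omega⟩ := Fin.ext ht
          rw [he]; exact hmid
        · have he : t = ⟨n - 1, by omega⟩ :=
            Fin.ext (show t.val = n - 1 by have := t.isLt; omega)
          rw [he, hmemlast u, hmemlast v]
      · -- restricted final arrow lifts to a swap or non-standard arrow
        have hi3 : i'.val = n - 3 := by have := i'.isLt; omega
        have hui' : u.val ⟨n - 3, by omega⟩ = false := by
          have he : (⟨i'.val, i'.isLt⟩ : Fin (n - 2)) = i' := Fin.ext rfl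
          have : RU ⟨i'.val, i'.isLt⟩ = false := by rw [he]; exact hui
          have h2 : u.val ⟨i'.val, by omega⟩ = false := this
          have he2 : (⟨n - 3, by omega⟩ : Fin n) = ⟨i'.val, by omega⟩ :=
            Fin.ext (show n - 3 = i'.val from hi3.symm)
          rw [he2]; exact h2
        have hvi' : v.val ⟨n - 3, by omega⟩ = true := by
          have he : (⟨i'.val, i'.isLt⟩ : Fin (n - 2)) = i' := Fin.ext rfl
          have : RV ⟨i'.val, i'.isLt⟩ = true := by rw [he]; exact hvi
          have h2 : v.val ⟨i'.val, by omega⟩ = true := this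
          have he2 : (⟨n - 3, by omega⟩ : Fin n) = ⟨i'.val, by omega⟩ :=
            Fin.ext (show n - 3 = i'.val from hi3.symm)
          rw [he2]; exact h2
        have hlow : ∀ t : Fin n, t.val < n - 2 → t.val ≠ n - 3 → v.val t = u.val t := by
          intro t ht hti
          have h1 : (⟨t.val, ht⟩ : Fin (n - 2)) ≠ i' := by
            intro h
            have hv : t.val = i'.val := congrArg Fin.val h
            exact hti (by omega)
          have := hrest ⟨t.val, ht⟩ h1
          exact this
        have hres : par RV = par RU + 1 := by
          have hp : par RV = par RU + ind (RV i') - ind (RU i') :=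
            par_one RU RV i' hrest
          rw [hui, hvi] at hp
          rw [hp]
          simp [ind]
        have hmid : v.val ⟨n - 2, by omega⟩ ≠ u.val ⟨n - 2, by omega⟩ := by
          intro h
          have h1 := hmempar u
          have h2 := hmempar v
          rw [hpu] at h1
          rw [hpv, hres, h] at h2
          have h3 := h2.trans h1.symm
          have h4 : par RU + (1 + ind (u.val ⟨n - 2, by omega⟩))
              = par RU + (0 + ind (u.val ⟨n - 2, by omega⟩)) := by
            rw [zero_add]
            rw [add_assoc] at h3
            exact h3
          have h5 := add_right_cancel (add_left_cancel h4)
          exact absurd h5 (by decide)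
        have hrest' : ∀ t : Fin n, t ≠ ⟨n - 3, by omega⟩ → t ≠ ⟨n - 2, by omega⟩ →
            v.val t = u.val t := by
          intro t hti htj
          have hti' : t.val ≠ n - 3 := fun h => hti (Fin.ext h)
          have htj' : t.val ≠ n - 2 := fun h => htj (Fin.ext h)
          rcases lt_trichotomy t.val (n - 2) with ht | ht | ht
          · exact hlow t ht hti'
          · exact absurd ht htj'
          · have he : t = ⟨n - 1, by omega⟩ :=
              Fin.ext (show t.val = n - 1 by have := t.isLt; omega)
            rw [he, hmemlast u, hmemlast v]
        cases huj : u.val ⟨n - 2, by omega⟩ with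
        | true =>
          left; left
          have hvj : v.val ⟨n - 2, by omega⟩ = false := by
            cases h : v.val ⟨n - 2, by omega⟩
            · rfl
            · rw [huj] at hmid; exact absurd h hmid
          exact ⟨⟨n - 3, by omega⟩, ⟨n - 2, by omega⟩, show n - 2 = n - 3 + 1 by omega,
            hui', huj, hvi', hvj, hrest'⟩
        | false =>
          right
          have hvj : v.val ⟨n - 2, by omega⟩ = true := by
            cases h : v.val ⟨n - 2, by omega⟩
            · rw [huj] at hmid; exact absurd h hmid
            · rfl
          exact ⟨⟨n - 3, by omega⟩, ⟨n - 2, by omega⟩, rfl, rfl,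
            hui', huj, hvi', hvj, hrest'⟩

end Stmt12
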